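/- Let μ be a Borel probability measure on ℝ^d absolutely continuous with respect to Lebesgue measure, let X_1,…,X_n be i.i.d. random vectors with law μ, and let h_1,…,h_n be n distinct points of [0,1]^d. Then for every pair of distinct permutations σ_1 ≠ σ_2 of {1,…,n}, P( Σ_{i=1}^n ‖X_i − h_{σ_1(i)}‖² = Σ_{i=1}^n ‖X_i − h_{σ_2(i)}‖² ) = 0; consequently, almost surely the minimizer of σ ↦ Σ_{i=1}^n ‖X_i − h_{σ(i)}‖² over all permutations σ of {1,…,n} is unique. -/

import Mathlib

open MeasureTheory ProbabilityTheory Filter Topology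
open scoped ENNReal NNReal

noncomputable section

/-- `Euc d` is the Euclidean space `ℝ^d` with its Euclidean norm. -/
abbrev Euc (d : ℕ) : Type := EuclideanSpace ℝ (Fin d)

/-- The unit cube `[0,1]^d`. -/
def unitCube (d : ℕ) : Set (Euc d) := {x | ∀ i, x i ∈ Set.Icc (0 : ℝ) 1}

/-- A permutation `σ` is an optimal assignment of the points `x` to the points `h` if it
minimizes `σ ↦ ∑ i ‖x i − h (σ i)‖²` over all permutations. -/
def IsOptAssign {d n : ℕ} (x h : Fin n → Euc d) (σ : Equiv.Perm (Fin n)) : Prop :=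
  ∀ τ : Equiv.Perm (Fin n), ∑ i, ‖x i - h (σ i)‖ ^ 2 ≤ ∑ i, ‖x i - h (τ i)‖ ^ 2

/-- Product of absolutely continuous measures is absolutely continuous. -/
lemma pi_absolutelyContinuous {α : Type*} [MeasurableSpace α] :
    ∀ (m : ℕ) (μ ν : Fin m → Measure α), (∀ i, SigmaFinite (μ i)) → (∀ i, SigmaFinite (ν i)) →
      (∀ i, μ i ≪ ν i) → Measure.pi μ ≪ Measure.pi ν := by
  intro m
  induction m with
  | zero =>
    intro μ ν _ _ _
    rw [Measure.pi_of_empty, Measure.pi_of_empty]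
  | succ m ih =>
    intro μ ν hμ hν hac
    haveI : ∀ i, SigmaFinite (μ i) := hμ
    haveI : ∀ i, SigmaFinite (ν i) := hν
    set e := MeasurableEquiv.piFinSuccAbove (fun _ : Fin (m + 1) => α) 0 with he
    have h1 := measurePreserving_piFinSuccAbove μ 0
    have h2 := measurePreserving_piFinSuccAbove ν 0
    have key : (μ 0).prod (Measure.pi fun j => μ ((0 : Fin (m + 1)).succAbove j)) ≪
        (ν 0).prod (Measure.pi fun j => ν ((0 : Fin (m + 1)).succAbove j)) :=
      (hac 0).prod (ih _ _ (fun i => hμ _) (fun i => hν _) (fun i => hac _))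
    refine Measure.AbsolutelyContinuous.mk fun s hs hνs => ?_
    have hpre : e ⁻¹' (e.symm ⁻¹' s) = s := by ext x; simp
    have hs' : MeasurableSet (e.symm ⁻¹' s) := e.symm.measurable hs
    have hμs : Measure.pi μ s =
        ((μ 0).prod (Measure.pi fun j => μ ((0 : Fin (m + 1)).succAbove j))) (e.symm ⁻¹' s) := by
      rw [← h1.map_eq, e.map_apply, hpre]
    have hνs' : ((ν 0).prod (Measure.pi fun j => ν ((0 : Fin (m + 1)).succAbove j)))
        (e.symm ⁻¹' s) = 0 := by
      rw [← h2.map_eq, e.map_apply, hpre]; exact hνs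
    rw [hμs]
    exact key hνs'

/-- A hyperplane-like level set of a nonzero linear functional is Lebesgue-null. -/
lemma levelSet_null {E : Type*} [NormedAddCommGroup E] [NormedSpace ℝ E]
    [MeasurableSpace E] [BorelSpace E] [FiniteDimensional ℝ E]
    (μ : Measure E) [μ.IsAddHaarMeasure] (L : E →ₗ[ℝ] ℝ) (hL : L ≠ 0) (c : ℝ) :
    μ {y | L y = c} = 0 := by
  rcases Set.eq_empty_or_nonempty {y : E | L y = c} with hemp | ⟨y₀, hy₀⟩
  · rw [hemp]; exact measure_empty
  · have hset : {y : E | L y = c} = (AffineSubspace.mk' y₀ (LinearMap.ker L) : Set E) := by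
      ext y
      simp only [Set.mem_setOf_eq, AffineSubspace.mem_coe, AffineSubspace.mem_mk',
        vsub_eq_sub, LinearMap.mem_ker, map_sub]
      constructor
      · intro hy; rw [hy, hy₀]; ring
      · intro hy
        have hy₀' : L y₀ = c := hy₀
        have := sub_eq_zero.mp hy
        linarith
    rw [hset]
    refine Measure.addHaar_affineSubspace μ _ fun htop => ?_
    apply hL
    have hdir : (AffineSubspace.mk' y₀ (LinearMap.ker L)).direction = LinearMap.ker L :=
      AffineSubspace.direction_mk' _ _
    rw [htop, AffineSubspace.direction_top] at hdir
    exact LinearMap.ker_eq_top.mp hdir.symm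

/-- If `X_1,…,X_n` are i.i.d. with law `μ` absolutely continuous w.r.t. Lebesgue measure and
`h_1,…,h_n` are distinct points of `[0,1]^d`, then for any two distinct permutations the two
assignment costs coincide with probability zero; consequently, almost surely the optimal
assignment is unique. -/
theorem stmt0
    {d n : ℕ} {Ω : Type*} [MeasurableSpace Ω] (P : Measure Ω) [IsProbabilityMeasure P]
    (μ : Measure (Euc d)) [IsProbabilityMeasure μ] (hac : μ ≪ volume)
    (X : Fin n → Ω → Euc d) (hXmeas : ∀ i, Measurable (X i))
    (hindep : iIndepFun X P)
    (hlaw : ∀ i, Measure.map (X i) P = μ)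
    (h : Fin n → Euc d) (hcube : ∀ i, h i ∈ unitCube d) (hinj : Function.Injective h) :
    (∀ σ₁ σ₂ : Equiv.Perm (Fin n), σ₁ ≠ σ₂ →
      P {ω | ∑ i, ‖X i ω - h (σ₁ i)‖ ^ 2 = ∑ i, ‖X i ω - h (σ₂ i)‖ ^ 2} = 0) ∧
    (∀ᵐ ω ∂P, ∃! σ : Equiv.Perm (Fin n), IsOptAssign (fun i => X i ω) h σ) := by
  -- the joint random vector
  set T : Ω → (Fin n → Euc d) := fun ω i => X i ω with hT
  have hTmeas : Measurable T := measurable_pi_lambda _ hXmeas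
  -- the joint law is the product measure
  have hjoint : Measure.map T P = Measure.pi (fun _ : Fin n => μ) := by
    refine (Measure.pi_eq fun s hs => ?_).symm
    rw [Measure.map_apply hTmeas (MeasurableSet.univ_pi hs)]
    have hpre : T ⁻¹' Set.pi Set.univ s = ⋂ i ∈ Finset.univ, X i ⁻¹' s i := by
      ext ω; simp [Set.mem_pi, hT]
    rw [hpre, hindep.measure_inter_preimage_eq_mul Finset.univ (fun i _ => hs i)]
    refine Finset.prod_congr rfl fun i _ => ?_
    rw [← hlaw i, Measure.map_apply (hXmeas i) (hs i)]
  -- the joint law is absolutely continuous w.r.t. Lebesgue measure on the product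
  have hjac : Measure.map T P ≪ (volume : Measure (Fin n → Euc d)) := by
    rw [hjoint, volume_pi]
    exact pi_absolutelyContinuous n _ _ (fun _ => inferInstance) (fun _ => inferInstance)
      (fun _ => hac)
  -- first part
  have part1 : ∀ σ₁ σ₂ : Equiv.Perm (Fin n), σ₁ ≠ σ₂ →
      P {ω | ∑ i, ‖X i ω - h (σ₁ i)‖ ^ 2 = ∑ i, ‖X i ω - h (σ₂ i)‖ ^ 2} = 0 := by
    intro σ₁ σ₂ hne
    obtain ⟨i₀, hi₀⟩ : ∃ i, σ₁ i ≠ σ₂ i := by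
      by_contra hcon
      push_neg at hcon
      exact hne (Equiv.ext hcon)
    set a : Fin n → Euc d := fun i => (2 : ℝ) • (h (σ₂ i) - h (σ₁ i)) with ha
    have hai₀ : a i₀ ≠ 0 := by
      simp only [ha, smul_ne_zero_iff, sub_ne_zero]
      exact ⟨two_ne_zero, fun hc => hi₀ (hinj hc.symm)⟩
    -- the linear functional
    set L : (Fin n → Euc d) →ₗ[ℝ] ℝ :=
      { toFun := fun y => ∑ i, inner ℝ (y i) (a i)
        map_add' := by
          intro y z
          simp only [Pi.add_apply, inner_add_left]
          rw [Finset.sum_add_distrib]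
        map_smul' := by
          intro r y
          simp only [Pi.smul_apply, real_inner_smul_left, RingHom.id_apply, smul_eq_mul]
          rw [Finset.mul_sum] } with hL
    have hLne : L ≠ 0 := by
      intro hcon
      have h1 : L (Pi.single i₀ (a i₀)) = ‖a i₀‖ ^ 2 := by
        simp only [hL, LinearMap.coe_mk, AddHom.coe_mk]
        rw [Finset.sum_eq_single_of_mem i₀ (Finset.mem_univ _)]
        · rw [Pi.single_eq_same, real_inner_self_eq_norm_sq]
        · intro j _ hj
          rw [Pi.single_eq_of_ne hj, inner_zero_left]
      rw [hcon] at h1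
      have : ‖a i₀‖ ≠ 0 := norm_ne_zero_iff.mpr hai₀
      simp only [LinearMap.zero_apply] at h1
      exact this (by nlinarith [h1.symm])
    set c : ℝ := ∑ i, ‖h (σ₂ i)‖ ^ 2 - ∑ i, ‖h (σ₁ i)‖ ^ 2 with hc
    -- the event rewritten as a level set of L
    have hset : ∀ y : Fin n → Euc d,
        (∑ i, ‖y i - h (σ₁ i)‖ ^ 2 = ∑ i, ‖y i - h (σ₂ i)‖ ^ 2) ↔ L y = c := by
      intro y
      have expand : ∀ τ : Equiv.Perm (Fin n), ∑ i, ‖y i - h (τ i)‖ ^ 2 =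
          ∑ i, ‖y i‖ ^ 2 - 2 * ∑ i, (inner ℝ (y i) (h (τ i)) : ℝ) + ∑ i, ‖h (τ i)‖ ^ 2 := by
        intro τ
        rw [Finset.mul_sum, ← Finset.sum_sub_distrib, ← Finset.sum_add_distrib]
        exact Finset.sum_congr rfl fun i _ => norm_sub_sq_real _ _
      have hLy : L y = 2 * ∑ i, (inner ℝ (y i) (h (σ₂ i)) : ℝ)
          - 2 * ∑ i, (inner ℝ (y i) (h (σ₁ i)) : ℝ) := by
        simp only [hL, LinearMap.coe_mk, AddHom.coe_mk, ha, real_inner_smul_right,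
          inner_sub_right]
        rw [Finset.mul_sum, Finset.mul_sum, ← Finset.sum_sub_distrib]
        exact Finset.sum_congr rfl fun i _ => by ring
      rw [expand σ₁, expand σ₂, hLy, hc]
      constructor <;> intro hh <;> linarith
    have hSmeas : MeasurableSet {y : Fin n → Euc d | L y = c} := by
      have : Continuous fun y : Fin n → Euc d => L y := by
        have : Continuous fun y : Fin n → Euc d => ∑ i, (inner ℝ (y i) (a i) : ℝ) := by
          refine continuous_finset_sum _ fun i _ => ?_
          exact (continuous_apply i).inner continuous_const
        simpa [hL] using this
      exact (this.measurable (measurableSet_singleton c))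
    have hEvent : {ω | ∑ i, ‖X i ω - h (σ₁ i)‖ ^ 2 = ∑ i, ‖X i ω - h (σ₂ i)‖ ^ 2}
        = T ⁻¹' {y | L y = c} := by
      ext ω; simp only [Set.mem_setOf_eq, Set.mem_preimage, hT]
      exact hset _
    haveI : (volume : Measure (Fin n → Euc d)).IsAddHaarMeasure :=
      Measure.pi.isAddHaarMeasure _
    rw [hEvent, ← Measure.map_apply hTmeas hSmeas]
    exact hjac (levelSet_null volume L hLne c)
  refine ⟨part1, ?_⟩
  -- almost surely all the costs are pairwise distinct
  have hnull : ∀ᵐ ω ∂P, ∀ σ₁ σ₂ : Equiv.Perm (Fin n), σ₁ ≠ σ₂ →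
      ∑ i, ‖X i ω - h (σ₁ i)‖ ^ 2 ≠ ∑ i, ‖X i ω - h (σ₂ i)‖ ^ 2 := by
    rw [ae_all_iff]
    intro σ₁
    rw [ae_all_iff]
    intro σ₂
    rcases eq_or_ne σ₁ σ₂ with rfl | hne
    · exact ae_of_all _ fun ω hcon => absurd rfl hcon
    · have h0 := part1 σ₁ σ₂ hne
      rw [ae_iff]
      convert h0 using 2
      ext ω
      simp [hne]
  filter_upwards [hnull] with ω hω
  obtain ⟨σ, hσ⟩ := Finite.exists_min
    (fun σ : Equiv.Perm (Fin n) => ∑ i, ‖X i ω - h (σ i)‖ ^ 2)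
  refine ⟨σ, hσ, fun τ hτ => ?_⟩
  by_contra hne
  exact hω τ σ hne (le_antisymm (hτ σ) (hσ τ))

end
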